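/- Let TS be a semantic labeled transition system with total transition relation, and fix a k-safety specification φ̂ given by ψ, (ξ i), φ. Then there exist Inv : (Fin k → S) → Prop and A : Schedule → (Fin k → S) → Prop satisfying (K1) ∀ s̄, (∀ i, s̄ i ∈ Init) → ψ s̄ → Inv s̄; (K2) ∀ s̄, Inv s̄ → ¬ Bad s̄; (K3) ∀ M s̄, Inv s̄ → A M s̄ → M is valid for s̄; (K4) ∀ M s̄ s̄' ℓ̄, Inv s̄ → A M s̄ → s̄ ↝[M,ℓ̄] s̄' → Inv s̄'; (K5) ∀ s̄, Inv s̄ → ∃ M, A M s̄, if and only if TS ⊨ φ̂. -/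

import Mathlib

/-- A semantic labeled transition system with a total transition relation. -/
structure LTS (S L : Type*) where
  Init : Set S
  Tr : S → L → S → Prop
  total : ∀ s, ∃ ℓ s', Tr s ℓ s'

/-- `t` is a trace of `T` starting from `s`. -/
def LTS.IsTrace {S L : Type*} (T : LTS S L) (t : ℕ → S) (s : S) : Prop :=
  t 0 = s ∧ ∀ n, ∃ ℓ, T.Tr (t n) ℓ (t (n + 1))

/-- The trace `t` has at least `j + 1` observation points with respect to `ξ`. -/
def HasObsUpTo {S : Type*} (ξ : S → Prop) (t : ℕ → S) (j : ℕ) : Prop :=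
  ∃ f : Fin (j + 1) → ℕ, StrictMono f ∧ ∀ i, ξ (t (f i))

/-- The `j`-th observation state of the trace `t` with respect to `ξ`:
`t n_j` where `n_j` is the `j`-th smallest element of `{n | ξ (t n)}`. -/
noncomputable def obsState {S : Type*} (ξ : S → Prop) (t : ℕ → S) (j : ℕ) : S :=
  t (Nat.nth (fun n => ξ (t n)) j)

/-- `TS ⊨ φ̂` for the `k`-safety specification given by `ψ`, `ξ`, `φ`. -/
def kSafetyModels {S L : Type*} (T : LTS S L) {k : ℕ} (ψ : (Fin k → S) → Prop)
    (ξ : Fin k → S → Prop) (φ : (Fin k → S) → Prop) : Prop :=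
  ∀ sb : Fin k → S, (∀ i, sb i ∈ T.Init) → ψ sb →
    ∀ t : Fin k → ℕ → S, (∀ i, T.IsTrace (t i) (sb i)) →
      ∀ j : ℕ, (∀ i, HasObsUpTo (ξ i) (t i) j) →
        φ (fun i => obsState (ξ i) (t i) j)

/-- `s̄ ↝[M,ℓ̄] s̄'`: the composed step with schedule `M` and labels `ℓ̄`. -/
def ComposedStep {S L : Type*} (T : LTS S L) {k : ℕ} (M : Set (Fin k)) (ℓ : Fin k → L)
    (sb sb' : Fin k → S) : Prop :=
  (∀ i ∈ M, T.Tr (sb i) (ℓ i) (sb' i)) ∧ ∀ i ∉ M, sb' i = sb i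

/-- `M` is a valid schedule for the composed state `s̄`. -/
def ValidSched {S : Type*} {k : ℕ} (ξ : Fin k → S → Prop) (M : Set (Fin k))
    (sb : Fin k → S) : Prop :=
  (∀ i ∈ M, ¬ ξ i (sb i)) ∨ (M = Set.univ ∧ ∀ i, ξ i (sb i))

/-- `Bad s̄`: all traces are at observation points but `φ` fails. -/
def BadState {S : Type*} {k : ℕ} (ξ : Fin k → S → Prop) (φ : (Fin k → S) → Prop)
    (sb : Fin k → S) : Prop :=
  (∀ i, ξ i (sb i)) ∧ ¬ φ sb

/-- A schedule: a nonempty subset of `Fin k`. -/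
def Sched (k : ℕ) := {M : Set (Fin k) // M.Nonempty}

open scoped Classical

namespace KSafetyAux

lemma count_congr' {p q : ℕ → Prop} [DecidablePred p] [DecidablePred q] :
    ∀ n : ℕ, (∀ m, m < n → (p m ↔ q m)) → Nat.count p n = Nat.count q n
  | 0, _ => by simp
  | n + 1, h => by
    rw [Nat.count_succ, Nat.count_succ, count_congr' n (fun m hm => h m (by omega))]
    by_cases hp : p n
    · rw [if_pos hp, if_pos ((h n (by omega)).1 hp)]
    · rw [if_neg hp, if_neg (fun hq => hp ((h n (by omega)).2 hq))]

noncomputable def ext {S L : Type*} (T : LTS S L) (s : S) : ℕ → S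
  | 0 => s
  | m + 1 => (T.total (ext T s m)).choose_spec.choose

@[simp] lemma ext_zero {S L : Type*} (T : LTS S L) (s : S) : ext T s 0 = s := rfl

lemma ext_step {S L : Type*} (T : LTS S L) (s : S) (m : ℕ) :
    ∃ ℓ, T.Tr (ext T s m) ℓ (ext T s (m + 1)) :=
  ⟨_, (T.total (ext T s m)).choose_spec.choose_spec⟩

lemma completeness {S L : Type*} (T : LTS S L) {k : ℕ} (hk : 1 ≤ k)
    (ψ : (Fin k → S) → Prop) (ξ : Fin k → S → Prop) (φ : (Fin k → S) → Prop)
    (hmod : kSafetyModels T ψ ξ φ) :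
    ∃ (Inv : (Fin k → S) → Prop) (A : Sched k → (Fin k → S) → Prop),
      (∀ sb, (∀ i, sb i ∈ T.Init) → ψ sb → Inv sb) ∧
      (∀ sb, Inv sb → ¬ BadState ξ φ sb) ∧
      (∀ (M : Sched k) sb, Inv sb → A M sb → ValidSched ξ M.val sb) ∧
      (∀ (M : Sched k) sb sb' ℓ, Inv sb → A M sb →
        ComposedStep T M.val ℓ sb sb' → Inv sb') ∧
      (∀ sb, Inv sb → ∃ M, A M sb) := by
  refine ⟨fun sb => ∃ (s0 : Fin k → S) (u : Fin k → ℕ → S) (n : Fin k → ℕ) (c : ℕ),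
      (∀ i, s0 i ∈ T.Init) ∧ ψ s0 ∧
      (∀ i, u i 0 = s0 i ∧ (∀ m, m < n i → ∃ ℓ, T.Tr (u i m) ℓ (u i (m + 1))) ∧
        u i (n i) = sb i ∧ Nat.count (fun m => ξ i (u i m)) (n i) = c),
    fun M sb => ValidSched ξ M.val sb, ?_, ?_, ?_, ?_, ?_⟩
  · -- K1
    intro sb hinit hψ
    exact ⟨sb, fun i _ => sb i, fun _ => 0, 0, hinit, hψ,
      fun i => ⟨rfl, fun m hm => absurd hm (Nat.not_lt_zero m), rfl, by simp⟩⟩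
  · -- K2
    rintro sb ⟨s0, u, n, c, hinit0, hψ0, hu⟩ ⟨hξ, hφ⟩
    obtain ⟨t, ht_def⟩ : ∃ t : Fin k → ℕ → S,
        t = fun i m => if m ≤ n i then u i m else ext T (u i (n i)) (m - n i) := ⟨_, rfl⟩
    have hagree : ∀ i m, m ≤ n i → t i m = u i m := by
      intro i m hm
      simp only [ht_def]
      rw [if_pos hm]
    have hun : ∀ i, u i (n i) = sb i := fun i => (hu i).2.2.1
    have huc : ∀ i, Nat.count (fun m => ξ i (u i m)) (n i) = c := fun i => (hu i).2.2.2
    have htrace : ∀ i, T.IsTrace (t i) (s0 i) := by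
      intro i
      obtain ⟨hu0, hutr, _, _⟩ := hu i
      refine ⟨by rw [hagree i 0 (Nat.zero_le _), hu0], ?_⟩
      intro m
      rcases lt_or_ge m (n i) with hm | hm
      · obtain ⟨ℓ, hℓ⟩ := hutr m hm
        refine ⟨ℓ, ?_⟩
        rw [hagree i m (le_of_lt hm), hagree i (m + 1) hm]
        exact hℓ
      · have e1 : t i m = ext T (u i (n i)) (m - n i) := by
          rcases eq_or_lt_of_le hm with h | h
          · rw [← h, Nat.sub_self, ext_zero, hagree i (n i) le_rfl]
          · simp only [ht_def]
            rw [if_neg (by omega)]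
        have e2 : t i (m + 1) = ext T (u i (n i)) ((m - n i) + 1) := by
          simp only [ht_def]
          rw [if_neg (by omega), show m + 1 - n i = (m - n i) + 1 by omega]
        rw [e1, e2]
        exact ext_step T _ _
    have hpn : ∀ i, ξ i (t i (n i)) := by
      intro i
      rw [hagree i (n i) le_rfl, hun i]
      exact hξ i
    have hpc : ∀ i, Nat.count (fun m => ξ i (t i m)) (n i) = c := by
      intro i
      rw [← huc i]
      exact count_congr' (n i) (fun m hm => by rw [hagree i m (le_of_lt hm)])
    have hcard : ∀ i, ∀ hf : (setOf (fun m => ξ i (t i m))).Finite, c < hf.toFinset.card := by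
      intro i hf
      have h1 : Nat.count (fun m => ξ i (t i m)) (n i + 1) = c + 1 := by
        rw [Nat.count_succ, hpc i, if_pos (hpn i)]
      have h2 : Nat.count (fun m => ξ i (t i m)) (n i + 1) ≤ hf.toFinset.card :=
        Nat.count_le_card hf (n i + 1)
      omega
    have hobs : ∀ i, HasObsUpTo (ξ i) (t i) c := by
      intro i
      refine ⟨fun a => Nat.nth (fun m => ξ i (t i m)) a, ?_, ?_⟩
      · intro a b hab
        exact Nat.nth_lt_nth' hab
          (fun hf => lt_of_le_of_lt (Nat.lt_succ_iff.mp b.isLt) (hcard i hf))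
      · intro a
        exact Nat.nth_mem a
          (fun hf => lt_of_le_of_lt (Nat.lt_succ_iff.mp a.isLt) (hcard i hf))
    have hres := hmod s0 hinit0 hψ0 t htrace c hobs
    apply hφ
    have heq : (fun i => obsState (ξ i) (t i) c) = sb := by
      funext i
      show t i (Nat.nth (fun m => ξ i (t i m)) c) = sb i
      have hnth : Nat.nth (fun m => ξ i (t i m)) c = n i := by
        conv_lhs => rw [← hpc i]
        exact Nat.nth_count (hpn i)
      rw [hnth, hagree i (n i) le_rfl, hun i]
    rw [← heq]
    exact hres
  · -- K3
    intro M sb _ h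
    exact h
  · -- K4
    rintro M sb sb' ℓ ⟨s0, u, n, c, hinit0, hψ0, hu⟩ hA ⟨hTr, hfix⟩
    rcases hA with h1 | h2
    · refine ⟨s0, fun i m => if m ≤ n i then u i m else sb' i,
        fun i => if i ∈ M.val then n i + 1 else n i, c, hinit0, hψ0, fun i => ?_⟩
      obtain ⟨hu0, hutr, hun, huc⟩ := hu i
      have hcc : Nat.count (fun m => ξ i (if m ≤ n i then u i m else sb' i)) (n i)
          = Nat.count (fun m => ξ i (u i m)) (n i) :=
        count_congr' (n i) (fun m hm => by rw [if_pos (le_of_lt hm)])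
      by_cases hi : i ∈ M.val
      · simp only [if_pos hi]
        refine ⟨by rw [if_pos (Nat.zero_le _)]; exact hu0, ?_, by rw [if_neg (by omega)], ?_⟩
        · intro m hm
          rcases lt_or_eq_of_le (Nat.lt_succ_iff.mp hm) with h | h
          · obtain ⟨ℓ', hℓ'⟩ := hutr m h
            refine ⟨ℓ', ?_⟩
            rw [if_pos (le_of_lt h), if_pos (show m + 1 ≤ n i from h)]
            exact hℓ'
          · subst h
            refine ⟨ℓ i, ?_⟩
            rw [if_pos le_rfl, if_neg (by omega), hun]
            exact hTr i hi
        · simp only [Nat.count_succ]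
          have hnotξ : ¬ ξ i (if n i ≤ n i then u i (n i) else sb' i) := by
            rw [if_pos le_rfl, hun]
            exact h1 i hi
          rw [hcc, huc, if_neg hnotξ]
          omega
      · simp only [if_neg hi]
        refine ⟨by rw [if_pos (Nat.zero_le _)]; exact hu0, ?_,
          by rw [if_pos le_rfl, hun, hfix i hi], ?_⟩
        · intro m hm
          obtain ⟨ℓ', hℓ'⟩ := hutr m hm
          refine ⟨ℓ', ?_⟩
          rw [if_pos (le_of_lt hm), if_pos (show m + 1 ≤ n i from hm)]
          exact hℓ'
        · exact hcc.trans huc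
    · obtain ⟨hMuniv, hξall⟩ := h2
      have hmem : ∀ i : Fin k, i ∈ M.val := by
        rw [hMuniv]; exact fun i => Set.mem_univ i
      refine ⟨s0, fun i m => if m ≤ n i then u i m else sb' i, fun i => n i + 1, c + 1,
        hinit0, hψ0, fun i => ?_⟩
      obtain ⟨hu0, hutr, hun, huc⟩ := hu i
      beta_reduce
      have hcc : Nat.count (fun m => ξ i (if m ≤ n i then u i m else sb' i)) (n i)
          = Nat.count (fun m => ξ i (u i m)) (n i) :=
        count_congr' (n i) (fun m hm => by rw [if_pos (le_of_lt hm)])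
      refine ⟨by rw [if_pos (Nat.zero_le _)]; exact hu0, ?_, by rw [if_neg (by omega)], ?_⟩
      · intro m hm
        rcases lt_or_eq_of_le (Nat.lt_succ_iff.mp hm) with h | h
        · obtain ⟨ℓ', hℓ'⟩ := hutr m h
          refine ⟨ℓ', ?_⟩
          beta_reduce
          rw [if_pos (le_of_lt h), if_pos (show m + 1 ≤ n i from h)]
          exact hℓ'
        · subst h
          refine ⟨ℓ i, ?_⟩
          beta_reduce
          rw [if_pos le_rfl, if_neg (by omega), hun]
          exact hTr i (hmem i)
      · simp only [Nat.count_succ]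
        have hposξ : ξ i (if n i ≤ n i then u i (n i) else sb' i) := by
          rw [if_pos le_rfl, hun]
          exact hξall i
        rw [hcc, huc, if_pos hposξ]
  · -- K5
    intro sb _
    by_cases h : ∀ i, ξ i (sb i)
    · exact ⟨⟨Set.univ, ⟨⟨0, hk⟩, Set.mem_univ _⟩⟩, Or.inr ⟨rfl, h⟩⟩
    · push_neg at h
      obtain ⟨i, hi⟩ := h
      exact ⟨⟨{i | ¬ ξ i (sb i)}, ⟨i, hi⟩⟩, Or.inl (fun j hj => hj)⟩

lemma lt_card_of_strictMono {p : ℕ → Prop} {j : ℕ} (f : Fin (j + 1) → ℕ)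
    (hmono : StrictMono f) (hp : ∀ i, p (f i)) {a : ℕ} (ha : a ≤ j)
    (hf : (setOf p).Finite) : a < hf.toFinset.card := by
  have h1 : Fintype.card (Fin (j + 1)) ≤ Fintype.card hf.toFinset := by
    apply Fintype.card_le_of_injective (fun i => ⟨f i, hf.mem_toFinset.mpr (hp i)⟩)
    intro a b hab
    exact hmono.injective (congrArg Subtype.val hab)
  simp only [Fintype.card_coe, Fintype.card_fin] at h1
  omega

lemma soundness {S L : Type*} (T : LTS S L) {k : ℕ} (hk : 1 ≤ k)
    (ψ : (Fin k → S) → Prop) (ξ : Fin k → S → Prop) (φ : (Fin k → S) → Prop)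
    (Inv : (Fin k → S) → Prop) (A : Sched k → (Fin k → S) → Prop)
    (hK1 : ∀ sb, (∀ i, sb i ∈ T.Init) → ψ sb → Inv sb)
    (hK2 : ∀ sb, Inv sb → ¬ BadState ξ φ sb)
    (hK3 : ∀ (M : Sched k) sb, Inv sb → A M sb → ValidSched ξ M.val sb)
    (hK4 : ∀ (M : Sched k) sb sb' ℓ, Inv sb → A M sb →
        ComposedStep T M.val ℓ sb sb' → Inv sb')
    (hK5 : ∀ sb, Inv sb → ∃ M, A M sb) :
    kSafetyModels T ψ ξ φ := by
  intro sb hinit hψ t ht j hobs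
  have hcard : ∀ i, ∀ a ≤ j, ∀ hf : (setOf (fun n => ξ i (t i n))).Finite,
      a < hf.toFinset.card := by
    intro i a ha hf
    obtain ⟨f, hmono, hp⟩ := hobs i
    exact lt_card_of_strictMono f hmono hp ha hf
  have hnthmem : ∀ i, ∀ a ≤ j, ξ i (t i (Nat.nth (fun n => ξ i (t i n)) a)) :=
    fun i a ha => Nat.nth_mem a (hcard i a ha)
  -- a junk label
  let ℓ0 : L := (T.total (t ⟨0, hk⟩ 0)).choose
  have key : ∀ N : ℕ, ∀ pos : Fin k → ℕ, ∀ m : ℕ,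
      (∑ i, (Nat.nth (fun n => ξ i (t i n)) j - pos i)) = N → m ≤ j →
      (∀ i, Nat.count (fun n => ξ i (t i n)) (pos i) = m) →
      Inv (fun i => t i (pos i)) →
      Inv (fun i => t i (Nat.nth (fun n => ξ i (t i n)) j)) := by
    intro N
    induction N using Nat.strong_induction_on with
    | _ N IH =>
      intro pos m hsum hm hc hInv
      have hle : ∀ i, pos i ≤ Nat.nth (fun n => ξ i (t i n)) j := by
        intro i
        by_contra hcon
        push_neg at hcon
        have h1 : Nat.count (fun n => ξ i (t i n)) (Nat.nth (fun n => ξ i (t i n)) j + 1)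
            = j + 1 := Nat.count_nth_succ (hcard i j le_rfl)
        have h2 := Nat.count_monotone (fun n => ξ i (t i n)) (show Nat.nth (fun n => ξ i (t i n)) j + 1 ≤ pos i by omega)
        rw [h1, hc i] at h2
        omega
      by_cases hall : ∀ i, pos i = Nat.nth (fun n => ξ i (t i n)) j
      · have heq : (fun i => t i (Nat.nth (fun n => ξ i (t i n)) j)) = fun i => t i (pos i) :=
          funext fun i => by rw [hall i]
        rw [heq]; exact hInv
      · obtain ⟨M, hA⟩ := hK5 _ hInv
        have hv := hK3 M _ hInv hA
        rcases hv with h1 | h2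
        · -- all scheduled components are not at observation points
          set pos' : Fin k → ℕ := fun i => if i ∈ M.val then pos i + 1 else pos i with hpos'
          have hstep : ComposedStep T M.val
              (fun i => if h : i ∈ M.val then ((ht i).2 (pos i)).choose else ℓ0)
              (fun i => t i (pos i)) (fun i => t i (pos' i)) := by
            constructor
            · intro i hi
              simp only [hpos', if_pos hi, dif_pos hi]
              exact ((ht i).2 (pos i)).choose_spec
            · intro i hi
              simp only [hpos', if_neg hi]
          have hInv' := hK4 M _ _ _ hInv hA hstep
          have hltM : ∀ i ∈ M.val, pos i < Nat.nth (fun n => ξ i (t i n)) j := by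
            intro i hi
            rcases lt_or_eq_of_le (hle i) with h | h
            · exact h
            · exfalso
              apply h1 i hi
              show ξ i (t i (pos i))
              rw [h]
              exact hnthmem i j le_rfl
          have hsum' : (∑ i, (Nat.nth (fun n => ξ i (t i n)) j - pos' i)) < N := by
            rw [← hsum]
            apply Finset.sum_lt_sum
            · intro i _
              simp only [hpos']
              split <;> omega
            · obtain ⟨i, hi⟩ := M.property
              refine ⟨i, Finset.mem_univ i, ?_⟩
              have := hltM i hi
              simp only [hpos', if_pos hi]
              omega
          refine IH _ hsum' pos' m rfl hm ?_ hInv'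
          intro i
          simp only [hpos']
          by_cases hi : i ∈ M.val
          · rw [if_pos hi, Nat.count_succ, if_neg (h1 i hi), hc i]
            omega
          · rw [if_neg hi, hc i]
        · -- full schedule: everybody is at an observation point
          obtain ⟨hMuniv, hξall⟩ := h2
          have hpos_eq : ∀ i, pos i = Nat.nth (fun n => ξ i (t i n)) m := by
            intro i
            rw [← hc i]
            exact (Nat.nth_count (hξall i)).symm
          have hmj : m < j := by
            rcases lt_or_eq_of_le hm with h | h
            · exact h
            · exfalso; apply hall; intro i; rw [hpos_eq i, h]
          have hltall : ∀ i, pos i < Nat.nth (fun n => ξ i (t i n)) j := by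
            intro i
            rw [hpos_eq i]
            exact Nat.nth_lt_nth' hmj (hcard i j le_rfl)
          have hmem : ∀ i : Fin k, i ∈ M.val := by rw [hMuniv]; exact fun i => Set.mem_univ i
          have hstep : ComposedStep T M.val
              (fun i => if h : i ∈ M.val then ((ht i).2 (pos i)).choose else ℓ0)
              (fun i => t i (pos i)) (fun i => t i (pos i + 1)) := by
            constructor
            · intro i hi
              simp only [dif_pos hi]
              exact ((ht i).2 (pos i)).choose_spec
            · intro i hi
              exact absurd (hmem i) hi
          have hInv' := hK4 M _ _ _ hInv hA hstep
          have hne : (Finset.univ : Finset (Fin k)).Nonempty := ⟨⟨0, hk⟩, Finset.mem_univ _⟩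
          have hsum' : (∑ i, (Nat.nth (fun n => ξ i (t i n)) j - (pos i + 1))) < N := by
            rw [← hsum]
            apply Finset.sum_lt_sum_of_nonempty hne
            intro i _
            have := hltall i
            omega
          refine IH _ hsum' (fun i => pos i + 1) (m + 1) rfl hmj ?_ hInv'
          intro i
          rw [Nat.count_succ, if_pos (hξall i), hc i]
  have hInv0 : Inv (fun i => t i 0) := by
    have heq : (fun i => t i 0) = sb := funext fun i => (ht i).1
    rw [heq]; exact hK1 sb hinit hψ
  have hfin := key (∑ i, (Nat.nth (fun n => ξ i (t i n)) j - 0)) (fun _ => 0) 0 rfl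
    (Nat.zero_le j) (fun i => Nat.count_zero _) hInv0
  have hnb := hK2 _ hfin
  by_contra hφ
  exact hnb ⟨fun i => hnthmem i j le_rfl, hφ⟩


end KSafetyAux

theorem kSafety_fol_encoding {S L : Type*} (T : LTS S L) {k : ℕ} (hk : 1 ≤ k)
    (ψ : (Fin k → S) → Prop) (ξ : Fin k → S → Prop) (φ : (Fin k → S) → Prop) :
    (∃ (Inv : (Fin k → S) → Prop) (A : Sched k → (Fin k → S) → Prop),
      (∀ sb, (∀ i, sb i ∈ T.Init) → ψ sb → Inv sb) ∧
      (∀ sb, Inv sb → ¬ BadState ξ φ sb) ∧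
      (∀ (M : Sched k) sb, Inv sb → A M sb → ValidSched ξ M.val sb) ∧
      (∀ (M : Sched k) sb sb' ℓ, Inv sb → A M sb →
        ComposedStep T M.val ℓ sb sb' → Inv sb') ∧
      (∀ sb, Inv sb → ∃ M, A M sb)) ↔
    kSafetyModels T ψ ξ φ := by
  constructor
  · rintro ⟨Inv, A, hK1, hK2, hK3, hK4, hK5⟩
    exact KSafetyAux.soundness T hk ψ ξ φ Inv A hK1 hK2 hK3 hK4 hK5
  · exact KSafetyAux.completeness T hk ψ ξ φ
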